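/- arXiv:1211.0419 — 8 statements merged into one kernel-verified Lean document; each statement's English description precedes it below -/
import Mathlib

section
/- Let Y be a partially ordered topological vector space ordered by a convex cone C with nonempty interior, Int C ≠ Y. For a nonempty set A ⊆ Y whose upper closure Cl₊A = cl(A + C) satisfies ∅ ≠ Cl₊A ≠ Y, the infimal set satisfies Inf A = { y ∈ Y : y ∉ A + Int C and {y} + Int C ⊆ A + Int C }. -/
open Set Pointwise

variable {Y : Type*} [AddCommGroup Y] [Module ℝ Y] [TopologicalSpace Y]
  [IsTopologicalAddGroup Y] [ContinuousSMul ℝ Y]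

/-- Upper closure of a set with respect to the cone `C`. -/
def upClo (C A : Set Y) : Set Y := closure (A + C)

/-- Weakly minimal elements of `A` with respect to the cone `C`. -/
def wMinSet (C A : Set Y) : Set Y := {y ∈ A | ({y} - interior C) ∩ A = ∅}

/-- Infimal set of `A` with respect to the cone `C`. -/
def infSet (C A : Set Y) : Set Y := wMinSet C (upClo C A)
theorem stmt_0 (C A : Set Y) (hC : Convex ℝ C)
    (hCone : ∀ r : ℝ, 0 < r → r • C ⊆ C)
    (hInt : (interior C).Nonempty) (hIntNe : interior C ≠ univ)
    (hA : A.Nonempty) (h1 : (upClo C A).Nonempty) (h2 : upClo C A ≠ univ) :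
    infSet C A = {y : Y | y ∉ A + interior C ∧ {y} + interior C ⊆ A + interior C} := by
  set D := interior C with hDdef
  set B := upClo C A with hBdef
  have hDopen : IsOpen D := isOpen_interior
  have hBclosed : IsClosed B := isClosed_closure
  -- C + C ⊆ C
  have hCC : C + C ⊆ C := by
    rintro z hz
    rw [Set.mem_add] at hz
    obtain ⟨x, hx, y, hy, rfl⟩ := hz
    have hm : (1/2:ℝ) • x + (1/2:ℝ) • y ∈ C :=
      hC hx hy (by norm_num) (by norm_num) (by norm_num)
    have h2 : (2:ℝ) • ((1/2:ℝ) • x + (1/2:ℝ) • y) ∈ C :=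
      hCone 2 (by norm_num) ⟨_, hm, rfl⟩
    have : (2:ℝ) • ((1/2:ℝ) • x + (1/2:ℝ) • y) = x + y := by
      rw [smul_add, smul_smul, smul_smul]; norm_num
    rwa [this] at h2
  -- D + C ⊆ D
  have hDC : D + C ⊆ D := by
    have ho : IsOpen (D + C) := hDopen.add_right
    have hsub : D + C ⊆ C := (Set.add_subset_add_right interior_subset).trans hCC
    exact interior_maximal hsub ho
  -- t • D ⊆ D for t > 0
  have htD : ∀ t : ℝ, 0 < t → ∀ d ∈ D, t • d ∈ D := by
    intro t ht d hd
    have : t • d ∈ t • D := ⟨d, hd, rfl⟩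
    rw [hDdef, ← interior_smul₀ ht.ne' C] at this
    exact interior_mono (hCone t ht) this
  -- key closure lemma
  have key : ∀ (y d : Y) (S : Set Y), d ∈ D → (∀ t : ℝ, 0 < t → y + t • d ∈ S) →
      y ∈ closure S := by
    intro y d S _ h
    have hc : Continuous (fun t : ℝ => y + t • d) := by continuity
    have h0 : Filter.Tendsto (fun t : ℝ => y + t • d) (nhds 0) (nhds y) := by
      have := hc.tendsto 0
      simpa using this
    have htend : Filter.Tendsto (fun t : ℝ => y + t • d)
        (nhdsWithin 0 (Set.Ioi (0:ℝ))) (nhds y) :=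
      h0.mono_left nhdsWithin_le_nhds
    exact mem_closure_of_tendsto htend
      (eventually_mem_nhdsWithin.mono fun t ht => h t ht)
  obtain ⟨c, hc⟩ := hInt
  -- A ⊆ B
  have hAB : A ⊆ B := by
    intro a ha
    refine key a c (A + C) hc fun t ht => ?_
    exact ⟨a, ha, t • c, hCone t ht ⟨c, interior_subset hc, rfl⟩, rfl⟩
  -- closure absorption: closure S + D ⊆ S + D
  have habs : ∀ S : Set Y, closure S + D ⊆ S + D := by
    intro S z hz
    rw [Set.mem_add] at hz
    obtain ⟨x, hx, u, hu, rfl⟩ := hz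
    have hopen : IsOpen ({x + u} - D) := by
      rw [sub_eq_add_neg]
      exact hDopen.neg.add_left
    have hxmem : x ∈ {x + u} - D := ⟨x + u, rfl, u, hu, add_sub_cancel_right x u⟩
    obtain ⟨s, hs1, hs2⟩ := mem_closure_iff.mp hx _ hopen hxmem
    obtain ⟨z, hz1, d, hd, hsd⟩ := hs1
    rw [Set.mem_singleton_iff] at hz1
    subst hz1
    refine ⟨s, hs2, d, hd, ?_⟩
    rw [← hsd]
    exact sub_add_cancel _ _
  -- B + D ⊆ A + D
  have hBD_AD : B + D ⊆ A + D := by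
    intro z hz
    have h1' : z ∈ (A + C) + D := habs (A + C) hz
    rw [add_assoc, add_comm C D] at h1'
    exact (Set.add_subset_add_left hDC) h1'
  have hAD_BD : A + D = B + D :=
    Set.Subset.antisymm (Set.add_subset_add_right hAB) hBD_AD
  -- B + D ⊆ B
  have hBD_B : B + D ⊆ B := by
    intro z hz
    have : z ∈ A + C :=
      (Set.add_subset_add_left interior_subset) (hBD_AD hz)
    exact subset_closure this
  ext y
  constructor
  · rintro ⟨hyB, hsep⟩
    constructor
    · rw [hAD_BD]
      rintro hmem
      rw [Set.mem_add] at hmem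
      obtain ⟨b, hb, d, hd, rfl⟩ := hmem
      have : b ∈ ({b + d} - D) ∩ B := ⟨⟨b + d, rfl, d, hd, add_sub_cancel_right b d⟩, hb⟩
      rw [hsep] at this
      exact this
    · rw [hAD_BD]
      exact Set.add_subset_add_right (Set.singleton_subset_iff.mpr hyB)
  · rintro ⟨hy1, hy2⟩
    have hy2' : ∀ d ∈ D, y + d ∈ B := by
      intro d hd
      have : y + d ∈ A + D := hy2 ⟨y, rfl, d, hd, rfl⟩
      rw [hAD_BD] at this
      exact hBD_B this
    have hyB : y ∈ B := by
      have : y ∈ closure B := key y c B hc fun t ht => hy2' _ (htD t ht c hc)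
      rwa [hBclosed.closure_eq] at this
    refine ⟨hyB, ?_⟩
    rw [Set.eq_empty_iff_forall_notMem]
    rintro b ⟨⟨z, hz1, d, hd, hbd⟩, hbB⟩
    rw [Set.mem_singleton_iff] at hz1
    subst hz1
    apply hy1
    rw [hAD_BD]
    exact ⟨b, hbB, d, hd, by rw [← hbd]; exact sub_add_cancel _ _⟩
end

section
/- Let A, B ⊆ Y with ∅ ≠ Cl₊A ≠ Y and ∅ ≠ Cl₊B ≠ Y. Then A + Int C = B + Int C if and only if Inf A = Inf B. -/
open Set Pointwise

variable {Y : Type*} [AddCommGroup Y] [Module ℝ Y] [TopologicalSpace Y]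
  [IsTopologicalAddGroup Y] [ContinuousSMul ℝ Y]

lemma smul_int_subset (C : Set Y) (hCone : ∀ r : ℝ, 0 < r → r • C ⊆ C)
    {r : ℝ} (hr : 0 < r) : r • interior C ⊆ interior C := by
  rw [← interior_smul₀ (ne_of_gt hr)]
  exact interior_mono (hCone r hr)

lemma smul_mem_int (C : Set Y) (hCone : ∀ r : ℝ, 0 < r → r • C ⊆ C)
    {r : ℝ} (hr : 0 < r) {c : Y} (hc : c ∈ interior C) : r • c ∈ interior C :=
  smul_int_subset C hCone hr ⟨c, hc, rfl⟩

lemma cone_add_self (C : Set Y) (hC : Convex ℝ C)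
    (hCone : ∀ r : ℝ, 0 < r → r • C ⊆ C) : C + C ⊆ C := by
  rintro _ ⟨c₁, h₁, c₂, h₂, rfl⟩
  have hmid : (1/2 : ℝ) • c₁ + (1/2 : ℝ) • c₂ ∈ C :=
    hC h₁ h₂ (by norm_num) (by norm_num) (by norm_num)
  have h2 : c₁ + c₂ ∈ (2:ℝ) • C := ⟨_, hmid, by module⟩
  exact hCone 2 (by norm_num) h2

lemma cone_add_int (C : Set Y) (hC : Convex ℝ C)
    (hCone : ∀ r : ℝ, 0 < r → r • C ⊆ C) : C + interior C ⊆ interior C := by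
  apply interior_maximal
  · exact (add_subset_add_left interior_subset).trans (cone_add_self C hC hCone)
  · exact isOpen_interior.add_left

lemma closure_add_int (C S : Set Y) :
    closure S + interior C ⊆ S + interior C := by
  rintro _ ⟨y, hy, c, hc, rfl⟩
  have hcont : Continuous fun x : Y => y + c - x := by continuity
  have hopen : IsOpen {x : Y | y + c - x ∈ interior C} := isOpen_interior.preimage hcont
  have hymem : y ∈ {x : Y | y + c - x ∈ interior C} := by simpa using hc
  obtain ⟨s, hs1, hs2⟩ := (mem_closure_iff.1 hy) _ hopen hymem
  exact ⟨s, hs2, y + c - s, hs1, by module⟩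

lemma addC_subset_closure_addInt (C A : Set Y) (hC : Convex ℝ C)
    (hCone : ∀ r : ℝ, 0 < r → r • C ⊆ C) (hInt : (interior C).Nonempty) :
    A + C ⊆ closure (A + interior C) := by
  obtain ⟨e, he⟩ := hInt
  rintro _ ⟨a, ha, c, hc, rfl⟩
  rw [mem_closure_iff]
  intro U hU hmem
  have htend : Filter.Tendsto (fun t : ℝ => a + c + t • e) (nhds 0) (nhds (a + c)) := by
    have : Continuous fun t : ℝ => a + c + t • e := by continuity
    have h0 : a + c + (0:ℝ) • e = a + c := by simp
    simpa [h0] using this.tendsto 0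
  have hev : ∀ᶠ t : ℝ in nhds 0, a + c + t • e ∈ U := htend.eventually (hU.mem_nhds hmem)
  have hev' : ∀ᶠ t : ℝ in nhdsWithin 0 (Ioi 0), a + c + t • e ∈ U :=
    hev.filter_mono nhdsWithin_le_nhds
  obtain ⟨t, ht, htU⟩ := (eventually_mem_nhdsWithin.and hev').exists
  have hce : c + t • e ∈ interior C :=
    cone_add_int C hC hCone ⟨c, hc, t • e, smul_mem_int C hCone ht he, rfl⟩
  exact ⟨a + c + t • e, htU, ⟨a, ha, c + t • e, hce, by abel⟩⟩

lemma upClo_eq_closure (C A : Set Y) (hC : Convex ℝ C)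
    (hCone : ∀ r : ℝ, 0 < r → r • C ⊆ C) (hInt : (interior C).Nonempty) :
    upClo C A = closure (A + interior C) := by
  apply Subset.antisymm
  · have h := addC_subset_closure_addInt C A hC hCone hInt
    simpa [upClo] using (closure_mono h).trans (by simp)
  · exact closure_mono (add_subset_add_left interior_subset)

lemma upClo_add_int (C A : Set Y) (hC : Convex ℝ C)
    (hCone : ∀ r : ℝ, 0 < r → r • C ⊆ C) :
    upClo C A + interior C = A + interior C := by
  apply Subset.antisymm
  · intro x hx
    have h1 : x ∈ (A + C) + interior C := closure_add_int C (A + C) hx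
    obtain ⟨_, ⟨a, ha, c, hc, rfl⟩, d, hd, rfl⟩ := h1
    exact ⟨a, ha, c + d, cone_add_int C hC hCone ⟨c, hc, d, hd, rfl⟩, by module⟩
  · rintro _ ⟨a, ha, e, he, rfl⟩
    have h2 : (1/2 : ℝ) • e ∈ interior C := smul_mem_int C hCone (by norm_num) he
    refine ⟨a + (1/2:ℝ) • e, subset_closure ⟨a, ha, (1/2:ℝ) • e, interior_subset h2, rfl⟩,
      (1/2:ℝ) • e, h2, by module⟩

lemma domination (C A : Set Y) (hC : Convex ℝ C)
    (hCone : ∀ r : ℝ, 0 < r → r • C ⊆ C)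
    (hA2 : upClo C A ≠ univ) :
    A + interior C ⊆ infSet C A + interior C := by
  set S := upClo C A with hS
  have hSclosed : IsClosed S := isClosed_closure
  have hL1 : S + interior C = A + interior C := upClo_add_int C A hC hCone
  have hSsub : S + interior C ⊆ S := by
    rw [hL1]
    exact (add_subset_add_left interior_subset).trans subset_closure
  rintro y ⟨a, ha, c, hc, rfl⟩
  set y₀ := a + c with hy₀
  have hyS : y₀ ∈ S := subset_closure ⟨a, ha, c, interior_subset hc, rfl⟩
  set T : Set ℝ := {t : ℝ | 0 ≤ t ∧ y₀ - t • c ∈ S} with hT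
  have hT0 : (0:ℝ) ∈ T := ⟨le_refl 0, by simpa using hyS⟩
  have hThalf : (1/2 : ℝ) ∈ T := by
    refine ⟨by norm_num, ?_⟩
    have : y₀ - (1/2:ℝ) • c = a + (1/2:ℝ) • c := by rw [hy₀]; module
    rw [this]
    exact subset_closure ⟨a, ha, (1/2:ℝ) • c,
      interior_subset (smul_mem_int C hCone (by norm_num) hc), rfl⟩
  -- bounded above
  obtain ⟨z, hz⟩ : ∃ z, z ∉ S := by
    by_contra h
    push_neg at h
    exact hA2 (eq_univ_of_forall h)
  obtain ⟨ε, hε, hεmem⟩ : ∃ ε > 0, ∀ s : ℝ, dist s 0 < ε → c + s • (z - y₀) ∈ interior C := by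
    have hcont : Filter.Tendsto (fun s : ℝ => c + s • (z - y₀)) (nhds 0) (nhds c) := by
      have : Continuous fun s : ℝ => c + s • (z - y₀) := by continuity
      have h0 : c + (0:ℝ) • (z - y₀) = c := by simp
      simpa [h0] using this.tendsto 0
    have := hcont.eventually (isOpen_interior.mem_nhds hc)
    rw [Metric.eventually_nhds_iff] at this
    obtain ⟨ε, hε, h⟩ := this
    exact ⟨ε, hε, fun s hs => h hs⟩
  have hTbdd : BddAbove T := by
    refine ⟨ε⁻¹, fun t ht => ?_⟩
    by_contra hgt
    push_neg at hgt
    have htpos : 0 < t := lt_of_le_of_lt (inv_nonneg.mpr hε.le) hgt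
    have hinv : dist t⁻¹ 0 < ε := by
      rw [Real.dist_eq, sub_zero, abs_of_pos (inv_pos.mpr htpos)]
      exact (inv_lt_comm₀ htpos hε).mpr hgt
    have hmem : c + t⁻¹ • (z - y₀) ∈ interior C := hεmem _ hinv
    have hsc : t • (c + t⁻¹ • (z - y₀)) ∈ interior C := smul_mem_int C hCone htpos hmem
    have heq : (y₀ - t • c) + t • (c + t⁻¹ • (z - y₀)) = z := by
      rw [smul_add, smul_smul, mul_inv_cancel₀ (ne_of_gt htpos), one_smul]
      abel
    exact hz (hSsub ⟨_, ht.2, _, hsc, heq⟩)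
  set t₀ := sSup T with ht₀
  have ht₀half : (1/2:ℝ) ≤ t₀ := le_csSup hTbdd hThalf
  have ht₀pos : 0 < t₀ := lt_of_lt_of_le (by norm_num) ht₀half
  have hφcont : Continuous fun t : ℝ => y₀ - t • c := by continuity
  have ht₀S : y₀ - t₀ • c ∈ S := by
    have hcl : t₀ ∈ closure T := csSup_mem_closure ⟨0, hT0⟩ hTbdd
    have himg : (fun t : ℝ => y₀ - t • c) '' T ⊆ S := by
      rintro _ ⟨t, ht, rfl⟩; exact ht.2
    have := image_closure_subset_closure_image (f := fun t : ℝ => y₀ - t • c) hφcont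
      (mem_image_of_mem _ hcl)
    exact hSclosed.closure_subset ((closure_mono himg) this)
  have hwmin : y₀ - t₀ • c ∈ infSet C A := by
    refine ⟨ht₀S, ?_⟩
    rw [eq_empty_iff_forall_notMem]
    rintro w ⟨hw1, hw2⟩
    obtain ⟨_, rfl, d, hd, rfl⟩ := hw1
    have hmem : (y₀ - t₀ • c) ∈ A + interior C := by
      rw [← hL1]
      exact ⟨_, hw2, d, hd, by module⟩
    have hopen : IsOpen (A + interior C) := isOpen_interior.add_left
    have htend : Filter.Tendsto (fun t : ℝ => y₀ - t • c) (nhds t₀)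
        (nhds (y₀ - t₀ • c)) := hφcont.tendsto t₀
    have hev : ∀ᶠ t : ℝ in nhdsWithin t₀ (Ioi t₀), y₀ - t • c ∈ A + interior C :=
      (htend.eventually (hopen.mem_nhds hmem)).filter_mono nhdsWithin_le_nhds
    obtain ⟨t, htgt, htmem⟩ := (eventually_mem_nhdsWithin.and hev).exists
    have htS : y₀ - t • c ∈ S := hSsub (by rw [hL1]; exact htmem)
    have htT : t ∈ T := ⟨le_of_lt (lt_trans ht₀pos htgt), htS⟩
    exact absurd (le_csSup hTbdd htT) (not_le.mpr htgt)
  refine ⟨y₀ - t₀ • c, hwmin, t₀ • c, smul_mem_int C hCone ht₀pos hc, by module⟩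

theorem stmt_1 (C A B : Set Y) (hC : Convex ℝ C)
    (hCone : ∀ r : ℝ, 0 < r → r • C ⊆ C)
    (hInt : (interior C).Nonempty) (hIntNe : interior C ≠ univ)
    (hA1 : (upClo C A).Nonempty) (hA2 : upClo C A ≠ univ)
    (hB1 : (upClo C B).Nonempty) (hB2 : upClo C B ≠ univ) :
    A + interior C = B + interior C ↔ infSet C A = infSet C B := by
  constructor
  · intro h
    have hup : upClo C A = upClo C B := by
      rw [upClo_eq_closure C A hC hCone hInt, upClo_eq_closure C B hC hCone hInt, h]
    unfold infSet
    rw [hup]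
  · intro h
    have hsubA : infSet C A ⊆ upClo C A := fun y hy => hy.1
    have hsubB : infSet C B ⊆ upClo C B := fun y hy => hy.1
    apply Subset.antisymm
    · calc A + interior C ⊆ infSet C A + interior C := domination C A hC hCone hA2
        _ = infSet C B + interior C := by rw [h]
        _ ⊆ upClo C B + interior C := add_subset_add_right hsubB
        _ = B + interior C := upClo_add_int C B hC hCone
    · calc B + interior C ⊆ infSet C B + interior C := domination C B hC hCone hB2
        _ = infSet C A + interior C := by rw [h]
        _ ⊆ upClo C A + interior C := add_subset_add_right hsubA
        _ = A + interior C := upClo_add_int C A hC hCone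
end

section
/- Let A ⊆ Y with ∅ ≠ Cl₊A ≠ Y. Then Cl₊A = Inf A ∪ (Inf A + Int C). -/
open Set Pointwise

variable {Y : Type*} [AddCommGroup Y] [Module ℝ Y] [TopologicalSpace Y]
  [IsTopologicalAddGroup Y] [ContinuousSMul ℝ Y]

private lemma closure_add_subset'' (S T : Set Y) : closure S + T ⊆ closure (S + T) := by
  rintro x ⟨a, ha, b, hb, rfl⟩
  exact map_mem_closure (f := (· + b)) (continuous_add_right b) ha fun s hs => add_mem_add hs hb

theorem stmt_3 (C A : Set Y) (hC : Convex ℝ C)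
    (hCone : ∀ r : ℝ, 0 < r → r • C ⊆ C)
    (hInt : (interior C).Nonempty) (hIntNe : interior C ≠ univ)
    (h1 : (upClo C A).Nonempty) (h2 : upClo C A ≠ univ) :
    upClo C A = infSet C A ∪ (infSet C A + interior C) := by
  simp only [infSet]
  set B := upClo C A with hBdef
  -- basic cone facts
  have hCC : C + C ⊆ C := by
    rintro x ⟨a, ha, b, hb, rfl⟩
    have hmid : (1/2 : ℝ) • a + (1/2 : ℝ) • b ∈ C :=
      hC ha hb (by norm_num) (by norm_num) (by norm_num)
    have h2m := hCone 2 (by norm_num) (smul_mem_smul_set (a := (2:ℝ)) hmid)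
    have : (2 : ℝ) • ((1/2 : ℝ) • a + (1/2 : ℝ) • b) = a + b := by
      rw [smul_add, smul_smul, smul_smul]; norm_num
    rwa [this] at h2m
  have hIntScale : ∀ r : ℝ, 0 < r → r • interior C ⊆ interior C := fun r hr =>
    interior_maximal ((smul_set_mono interior_subset).trans (hCone r hr))
      (isOpen_interior.smul₀ (ne_of_gt hr))
  have hBclosed : IsClosed B := isClosed_closure
  have hBInt : B + interior C ⊆ B := by
    calc B + interior C ⊆ closure (A + C) + C := add_subset_add_left interior_subset
      _ ⊆ closure (A + C + C) := closure_add_subset'' _ _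
      _ ⊆ closure (A + C) := closure_mono (by rw [add_assoc]; exact add_subset_add_left hCC)
  -- absorbing property of interior points
  have habs : ∀ c ∈ interior C, ∀ v : Y, ∃ t₀ : ℝ, ∀ t ≥ t₀, t • c + v ∈ interior C := by
    intro c hc v
    have htend : Filter.Tendsto (fun t : ℝ => c + t⁻¹ • v) Filter.atTop (nhds c) := by
      have h0 : Filter.Tendsto (fun t : ℝ => t⁻¹ • v) Filter.atTop (nhds ((0:ℝ) • v)) :=
        tendsto_inv_atTop_zero.smul_const v
      rw [zero_smul] at h0
      simpa using (tendsto_const_nhds (x := c) (f := Filter.atTop)).add h0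
    have hev := htend.eventually (isOpen_interior.eventually_mem hc)
    obtain ⟨t₀, ht₀⟩ := Filter.eventually_atTop.mp hev
    refine ⟨max t₀ 1, fun t ht => ?_⟩
    have htpos : (0:ℝ) < t := lt_of_lt_of_le one_pos (le_trans (le_max_right _ _) ht)
    have hmem : c + t⁻¹ • v ∈ interior C := ht₀ t (le_trans (le_max_left _ _) ht)
    have := hIntScale t htpos (smul_mem_smul_set hmem)
    rwa [smul_add, smul_smul, mul_inv_cancel₀ (ne_of_gt htpos), one_smul] at this
  apply Subset.antisymm
  · -- hard inclusion
    intro y hy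
    by_cases hw : ({y} - interior C) ∩ B = ∅
    · exact Or.inl ⟨hy, hw⟩
    · obtain ⟨x, hx1, hxB⟩ := nonempty_iff_ne_empty.mpr hw
      obtain ⟨a, ha, c, hc, hacx⟩ := hx1
      rw [mem_singleton_iff] at ha
      rw [ha] at hacx
      rw [← hacx] at hxB
      clear hacx ha
      set T : Set ℝ := {t : ℝ | y - t • c ∈ B} with hTdef
      have h0T : (0:ℝ) ∈ T := by simp [hTdef, hy]
      have h1T : (1:ℝ) ∈ T := by simpa [hTdef] using hxB
      have hTclosed : IsClosed T :=
        hBclosed.preimage (continuous_const.sub (continuous_id.smul continuous_const))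
      have hTbdd : BddAbove T := by
        by_contra hbd
        apply h2
        rw [eq_univ_iff_forall]
        intro z
        obtain ⟨t₀, ht₀⟩ := habs c hc (z - y)
        obtain ⟨t, htT, htgt⟩ := not_bddAbove_iff.mp hbd t₀
        have hmem : t • c + (z - y) ∈ interior C := ht₀ t htgt.le
        have hz : z = (y - t • c) + (t • c + (z - y)) := by abel
        rw [hz]
        exact hBInt (add_mem_add htT hmem)
      set s := sSup T with hsdef
      have hsT : s ∈ T := hTclosed.csSup_mem ⟨0, h0T⟩ hTbdd
      have hs1 : (1:ℝ) ≤ s := le_csSup hTbdd h1T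
      have hwMin : y - s • c ∈ wMinSet C B := by
        refine ⟨hsT, ?_⟩
        by_contra hne
        obtain ⟨x, hx1, hxB'⟩ := nonempty_iff_ne_empty.mpr hne
        obtain ⟨a, ha, d, hd, hadx⟩ := hx1
        rw [mem_singleton_iff] at ha
        rw [ha] at hadx
        rw [← hadx] at hxB'
        -- find ε > 0 with d - ε • c ∈ interior C
        have htend : Filter.Tendsto (fun ε : ℝ => d - ε • c) (nhdsWithin 0 (Ioi 0)) (nhds d) := by
          have h0 : Filter.Tendsto (fun ε : ℝ => ε • c) (nhds (0:ℝ)) (nhds ((0:ℝ) • c)) :=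
            (continuous_id.smul continuous_const).tendsto 0
          rw [zero_smul] at h0
          have := (tendsto_const_nhds (x := d) (f := nhds (0:ℝ))).sub h0
          rw [sub_zero] at this
          exact this.mono_left nhdsWithin_le_nhds
        have hev := htend.eventually (isOpen_interior.eventually_mem hd)
        obtain ⟨ε, hεI, hεpos⟩ := (hev.and (eventually_mem_nhdsWithin)).exists
        rw [mem_Ioi] at hεpos
        have hmem : y - (s + ε) • c ∈ B := by
          have : y - (s + ε) • c = (y - s • c - d) + (d - ε • c) := by
            rw [add_smul]; abel
          rw [this]
          exact hBInt (add_mem_add hxB' hεI)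
        have : s + ε ≤ s := le_csSup hTbdd hmem
        linarith
      refine Or.inr ⟨y - s • c, hwMin, s • c, ?_, by simp⟩
      exact hIntScale s (by linarith) (smul_mem_smul_set hc)
  · -- easy inclusion
    apply union_subset
    · exact fun y hy => hy.1
    · exact (add_subset_add_right (fun y hy => hy.1)).trans hBInt
end

section
/- Let A ⊆ Y with ∅ ≠ Cl₊A ≠ Y. Then Inf A ∪ (Inf A − Int C) ∪ (Inf A + Int C) = Y. -/
open Set Pointwise

variable {Y : Type*} [AddCommGroup Y] [Module ℝ Y] [TopologicalSpace Y]
  [IsTopologicalAddGroup Y] [ContinuousSMul ℝ Y]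

theorem stmt_5 (C A : Set Y) (hC : Convex ℝ C)
    (hCone : ∀ r : ℝ, 0 < r → r • C ⊆ C)
    (hInt : (interior C).Nonempty) (hIntNe : interior C ≠ univ)
    (h1 : (upClo C A).Nonempty) (h2 : upClo C A ≠ univ) :
    infSet C A ∪ (infSet C A - interior C) ∪ (infSet C A + interior C) = univ := by
  -- basic cone facts
  have hCC : C + C ⊆ C := by
    rintro x ⟨a, ha, b, hb, rfl⟩
    have h := hC ha hb (by norm_num : (0:ℝ) ≤ 1/2) (by norm_num : (0:ℝ) ≤ 1/2) (by norm_num)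
    have h2' : (2:ℝ) • ((1/2:ℝ) • a + (1/2:ℝ) • b) ∈ C := hCone 2 (by norm_num) ⟨_, h, rfl⟩
    have heq : (2:ℝ) • ((1/2:ℝ) • a + (1/2:ℝ) • b) = a + b := by
      rw [smul_add, smul_smul, smul_smul]; norm_num
    rw [heq] at h2'
    exact h2'
  have hIC : ∀ r : ℝ, 0 < r → r • interior C ⊆ interior C := by
    intro r hr
    have hopen : IsOpen (r • interior C) := by
      rw [← Set.image_smul]; exact isOpenMap_smul₀ hr.ne' _ isOpen_interior
    exact interior_maximal ((smul_set_mono interior_subset).trans (hCone r hr)) hopen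
  have hCIC : C + interior C ⊆ C := fun x ⟨a, ha, b, hb, h⟩ =>
    hCC ⟨a, ha, b, interior_subset hb, h⟩
  set B := upClo C A with hBdef
  have hBclosed : IsClosed B := isClosed_closure
  -- key: B + interior C ⊆ interior B
  have hBI : ∀ x ∈ B, ∀ c ∈ interior C, x + c ∈ interior B := by
    intro x hx c hc
    -- first: x + c ∈ (A + C) + interior C
    have hnb : ({x + c} - interior C) ∈ nhds x := by
      refine IsOpen.mem_nhds ?_ ⟨x + c, rfl, c, hc, by show x + c - c = x; abel⟩
      have : {x + c} - interior C = (fun v => x + c - v) '' interior C := by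
        ext u
        constructor
        · rintro ⟨a, rfl, d, hd, rfl⟩; exact ⟨d, hd, rfl⟩
        · rintro ⟨d, hd, rfl⟩; exact ⟨x + c, rfl, d, hd, rfl⟩
      rw [this]
      exact (Homeomorph.subLeft (x + c)).isOpenMap _ isOpen_interior
    obtain ⟨s, hs1, hs2⟩ := mem_closure_iff_nhds.mp hx _ hnb
    obtain ⟨_, rfl, d, hd, hsd⟩ := hs1
    -- s = x + c - d, s ∈ A + C, so x + c = s + d ∈ (A+C) + interior C
    have hmem : x + c ∈ (A + C) + interior C := ⟨s, hs2, d, hd, by rw [← hsd]; beta_reduce; abel⟩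
    -- (A+C) + interior C is open and ⊆ A + C ⊆ B
    have hopen : IsOpen ((A + C) + interior C) := isOpen_interior.add_left
    have hsub : (A + C) + interior C ⊆ B := by
      refine le_trans ?_ subset_closure
      rintro u ⟨v, ⟨a, ha, b, hb, rfl⟩, d, hd, rfl⟩
      exact ⟨a, ha, b + d, hCIC ⟨b, hb, d, hd, rfl⟩, by beta_reduce; abel⟩
    exact interior_maximal hsub hopen hmem
  obtain ⟨e, he⟩ := hInt
  obtain ⟨b, hb⟩ := h1
  obtain ⟨z, hz⟩ : ∃ z, z ∉ B := by
    by_contra h; push_neg at h; exact h2 (eq_univ_of_forall h)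
  -- Lemma L: for any v, v + t • e ∈ interior C for large t
  have hL : ∀ v : Y, ∃ M : ℝ, 0 < M ∧ ∀ t : ℝ, M ≤ t → v + t • e ∈ interior C := by
    intro v
    have hcont : Continuous fun s : ℝ => e + s • v := by continuity
    have hnhds : {s : ℝ | e + s • v ∈ interior C} ∈ nhds (0 : ℝ) := by
      have := hcont.continuousAt (x := (0:ℝ)) (isOpen_interior.mem_nhds (by simpa using he))
      exact this
    obtain ⟨ε, hε, hball⟩ := Metric.mem_nhds_iff.mp hnhds
    refine ⟨max 1 (2/ε), lt_max_of_lt_left one_pos, fun t ht => ?_⟩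
    have ht1 : (1:ℝ) ≤ t := le_trans (le_max_left _ _) ht
    have ht0 : 0 < t := lt_of_lt_of_le one_pos ht1
    have htε : t⁻¹ < ε := by
      have h2ε : 2/ε ≤ t := le_trans (le_max_right _ _) ht
      have h3 : t⁻¹ ≤ (2/ε)⁻¹ := inv_anti₀ (by positivity) h2ε
      have h4 : (2/ε)⁻¹ = ε/2 := by rw [inv_div]
      rw [h4] at h3
      linarith
    have hm : e + t⁻¹ • v ∈ interior C := by
      apply hball
      simp only [Metric.mem_ball, Real.dist_eq, sub_zero]
      rw [abs_of_pos (by positivity)]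
      exact htε
    have heq : v + t • e = t • (e + t⁻¹ • v) := by
      rw [smul_add, smul_smul, mul_inv_cancel₀ ht0.ne', one_smul]; abel
    rw [heq]
    exact hIC t ht0 ⟨_, hm, rfl⟩
  -- main argument, pointwise
  rw [eq_univ_iff_forall]
  intro y
  set T : Set ℝ := {t | y + t • e ∈ B} with hTdef
  have hTclosed : IsClosed T := by
    have hcont : Continuous fun t : ℝ => y + t • e := by continuity
    exact hBclosed.preimage hcont
  have hTne : T.Nonempty := by
    obtain ⟨M, hM0, hM⟩ := hL (y - b)
    refine ⟨M, ?_⟩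
    show y + M • e ∈ B
    have := hBI b hb _ (hM M le_rfl)
    have heq : b + (y - b + M • e) = y + M • e := by abel
    rw [heq] at this
    exact interior_subset this
  obtain ⟨Mz, hMz0, hMz⟩ := hL (z - y)
  have hTbdd : BddBelow T := by
    refine ⟨-Mz, fun t ht => ?_⟩
    by_contra hlt
    push_neg at hlt
    have hMt : Mz ≤ -t := by linarith
    have h5 := hBI _ ht _ (hMz (-t) hMt)
    have heq : y + t • e + (z - y + (-t) • e) = z := by
      rw [neg_smul]; abel
    rw [heq] at h5
    exact hz (interior_subset h5)
  set t₀ := sInf T with ht₀def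
  have ht₀T : t₀ ∈ T := hTclosed.csInf_mem hTne hTbdd
  set w := y + t₀ • e with hwdef
  have hwB : w ∈ B := ht₀T
  have hwmin : w ∈ infSet C A := by
    refine ⟨hwB, ?_⟩
    rw [eq_empty_iff_forall_notMem]
    rintro x ⟨⟨a, rfl, c, hc, rfl⟩, hxB⟩
    -- w = (w - c) + c ∈ interior B
    have hwint : w ∈ interior B := by
      have h6 := hBI _ hxB _ hc
      simpa using h6
    -- so points slightly below t₀ are in T
    have hcont : Continuous fun t : ℝ => y + t • e := by continuity
    have hnhds : {t : ℝ | y + t • e ∈ interior B} ∈ nhds t₀ :=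
      hcont.continuousAt (isOpen_interior.mem_nhds hwint)
    obtain ⟨ε, hε, hball⟩ := Metric.mem_nhds_iff.mp hnhds
    have hmem : t₀ - ε/2 ∈ T := by
      have : t₀ - ε/2 ∈ Metric.ball t₀ ε := by
        simp only [Metric.mem_ball, Real.dist_eq]
        rw [abs_of_nonpos (by linarith)]
        linarith
      show y + (t₀ - ε/2) • e ∈ B
      exact interior_subset (hball this)
    have := csInf_le hTbdd hmem
    linarith
  rcases lt_trichotomy t₀ 0 with h | h | h
  · -- y = w + (-t₀) • e ∈ infSet + interior C
    refine Or.inr ⟨w, hwmin, (-t₀) • e, ?_, ?_⟩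
    · exact hIC (-t₀) (by linarith) ⟨e, he, rfl⟩
    · show w + (-t₀) • e = y
      rw [hwdef, neg_smul]; abel
  · -- y = w
    refine Or.inl (Or.inl ?_)
    have : w = y := by rw [hwdef, h, zero_smul, add_zero]
    rwa [this] at hwmin
  · -- y = w - t₀ • e ∈ infSet - interior C
    refine Or.inl (Or.inr ⟨w, hwmin, t₀ • e, ?_, ?_⟩)
    · exact hIC t₀ h ⟨e, he, rfl⟩
    · show w - t₀ • e = y
      rw [hwdef]; abel
end

section
/- Let A ⊆ Y with ∅ ≠ Cl₊A ≠ Y and α > 0 a real number. Then α · Inf A = Inf(α · A). -/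
open Set Pointwise

variable {Y : Type*} [AddCommGroup Y] [Module ℝ Y] [TopologicalSpace Y]
  [IsTopologicalAddGroup Y] [ContinuousSMul ℝ Y]

theorem stmt_7 (C A : Set Y) (hC : Convex ℝ C)
    (hCone : ∀ r : ℝ, 0 < r → r • C ⊆ C)
    (hInt : (interior C).Nonempty) (hIntNe : interior C ≠ univ)
    (h1 : (upClo C A).Nonempty) (h2 : upClo C A ≠ univ)
    (α : ℝ) (hα : 0 < α) :
    α • infSet C A = infSet C (α • A) := by
  have hα0 : α ≠ 0 := ne_of_gt hα
  -- α • C = C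
  have hCeq : α • C = C := by
    apply subset_antisymm (hCone α hα)
    intro c hc
    refine ⟨α⁻¹ • c, hCone α⁻¹ (by positivity) ⟨c, hc, rfl⟩, ?_⟩
    simp [smul_smul, mul_inv_cancel₀ hα0]
  -- α • interior C = interior C
  have hIntEq : α • interior C = interior C := by
    rw [← interior_smul₀ hα0, hCeq]
  -- α • upClo C A = upClo C (α • A)
  have hUp : α • upClo C A = upClo C (α • A) := by
    unfold upClo
    rw [← closure_smul₀' hα0, smul_add, hCeq]
  -- wMinSet commutes with scaling
  unfold infSet
  rw [← hUp]
  unfold wMinSet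
  ext y
  constructor
  · rintro ⟨x, ⟨hxA, hx⟩, rfl⟩
    refine ⟨⟨x, hxA, rfl⟩, ?_⟩
    have : {α • x} - interior C = α • ({x} - interior C) := by
      rw [sub_eq_add_neg, sub_eq_add_neg, smul_add, smul_set_singleton, Set.smul_set_neg, hIntEq]
    rw [this, ← smul_set_inter₀ hα0, hx]
    simp
  · rintro ⟨⟨x, hxA, rfl⟩, hy⟩
    refine ⟨x, ⟨hxA, ?_⟩, rfl⟩
    have h' : {α • x} - interior C = α • ({x} - interior C) := by
      rw [sub_eq_add_neg, sub_eq_add_neg, smul_add, smul_set_singleton, Set.smul_set_neg, hIntEq]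
    rw [h', ← smul_set_inter₀ hα0] at hy
    exact (smul_set_eq_empty.mp hy)
end

section
/- Let (Aᵢ)ᵢ∈I be a family of subsets of Y with each ∅ ≠ Cl₊Aᵢ ≠ Y and ∅ ≠ Cl₊(⋃ᵢ Aᵢ) ≠ Y. Then Inf(⋃ᵢ Aᵢ) = Inf(⋃ᵢ Inf Aᵢ). -/
open Set Pointwise

variable {Y : Type*} [AddCommGroup Y] [Module ℝ Y] [TopologicalSpace Y]
  [IsTopologicalAddGroup Y] [ContinuousSMul ℝ Y]

open Filter Topology

lemma cone_add_mem (C : Set Y) (hC : Convex ℝ C)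
    (hCone : ∀ r : ℝ, 0 < r → r • C ⊆ C) {a b : Y} (ha : a ∈ C) (hb : b ∈ C) :
    a + b ∈ C := by
  have h : (1/2 : ℝ) • a + (1/2 : ℝ) • b ∈ C :=
    hC ha hb (by norm_num) (by norm_num) (by norm_num)
  have h2 : (2:ℝ) • ((1/2 : ℝ) • a + (1/2 : ℝ) • b) ∈ C :=
    hCone 2 two_pos (smul_mem_smul_set h)
  have : (2:ℝ) • ((1/2 : ℝ) • a + (1/2 : ℝ) • b) = a + b := by
    rw [smul_add, smul_smul, smul_smul]; norm_num
  rwa [this] at h2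

lemma upClo_add_mem (C : Set Y) (hC : Convex ℝ C)
    (hCone : ∀ r : ℝ, 0 < r → r • C ⊆ C) (A : Set Y)
    {d k : Y} (hd : d ∈ upClo C A) (hk : k ∈ C) : d + k ∈ upClo C A := by
  have : MapsTo (· + k) (A + C) (A + C) := by
    rintro x ⟨a, ha, c, hc, rfl⟩
    exact ⟨a, ha, c + k, cone_add_mem C hC hCone hc hk, (add_assoc a c k).symm⟩
  exact map_mem_closure (f := (· + k)) (continuous_add_right k) hd this

lemma key_lemma (C : Set Y) (hC : Convex ℝ C)
    (hCone : ∀ r : ℝ, 0 < r → r • C ⊆ C)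
    (hInt : (interior C).Nonempty) (A : Set Y)
    (hne' : upClo C A ≠ univ) :
    upClo C (infSet C A) = upClo C A := by
  set D := upClo C A with hD
  have hDclosed : IsClosed D := isClosed_closure
  have hDC : ∀ d ∈ D, ∀ k ∈ C, d + k ∈ D := fun d hd k hk =>
    upClo_add_mem C hC hCone A hd hk
  obtain ⟨c, hc⟩ := hInt
  have hcC : c ∈ C := interior_subset hc
  apply subset_antisymm
  · -- closure (wMinSet C D + C) ⊆ D
    apply closure_minimal _ hDclosed
    rintro x ⟨w, hw, k, hk, rfl⟩
    exact hDC w hw.1 k hk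
  · intro y hy
    obtain ⟨z, hz⟩ : ∃ z, z ∉ D := by
      by_contra h
      push_neg at h
      exact hne' (eq_univ_of_forall h)
    set S := {t : ℝ | 0 ≤ t ∧ y - t • c ∈ D} with hS
    have hS0 : (0:ℝ) ∈ S := ⟨le_refl 0, by simpa using hy⟩
    -- boundedness
    have hδ : ∃ δ > 0, ∀ s : ℝ, |s| < δ → s • (z - y) + c ∈ interior C := by
      have cont : Continuous (fun s : ℝ => s • (z - y) + c) := by continuity
      have htc : Tendsto (fun s : ℝ => s • (z - y) + c) (𝓝 0) (𝓝 c) := by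
        simpa using cont.tendsto 0
      have hev : ∀ᶠ s in 𝓝 (0:ℝ), s • (z - y) + c ∈ interior C :=
        htc.eventually (isOpen_interior.eventually_mem hc)
      rw [Metric.eventually_nhds_iff] at hev
      obtain ⟨δ, hδpos, hδ⟩ := hev
      exact ⟨δ, hδpos, fun s hs => hδ (by simpa [Real.dist_eq] using hs)⟩
    obtain ⟨δ, hδpos, hδ⟩ := hδ
    have hSbdd : BddAbove S := by
      refine ⟨max (1/δ) 1, fun t ht => ?_⟩
      by_contra hlt
      push_neg at hlt
      have ht1 : (1:ℝ) < t := lt_of_le_of_lt (le_max_right _ _) hlt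
      have htpos : 0 < t := by linarith
      have hinv : |1/t| < δ := by
        rw [abs_of_pos (by positivity)]
        rw [div_lt_iff₀ htpos]
        have h1δ : 1/δ < t := lt_of_le_of_lt (le_max_left _ _) hlt
        calc (1:ℝ) = δ * (1/δ) := by field_simp
        _ < δ * t := by exact mul_lt_mul_of_pos_left h1δ hδpos
      have hmem : (1/t) • (z - y) + c ∈ C := interior_subset (hδ _ hinv)
      have hmem2 : (z - y) + t • c ∈ C := by
        have := hCone t htpos (smul_mem_smul_set hmem)
        have heq : t • ((1/t) • (z - y) + c) = (z - y) + t • c := by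
          rw [smul_add, smul_smul]
          field_simp
          rw [one_smul]
        rwa [heq] at this
      have : z ∈ D := by
        have := hDC _ ht.2 _ hmem2
        have heq : y - t • c + ((z - y) + t • c) = z := by abel
        rwa [heq] at this
      exact hz this
    have hSclosed : IsClosed S := by
      have : S = Ici (0:ℝ) ∩ (fun t : ℝ => y - t • c) ⁻¹' D := by
        ext t; exact Iff.rfl
      rw [this]
      exact isClosed_Ici.inter (hDclosed.preimage (by continuity))
    have ht0mem : sSup S ∈ S := hSclosed.csSup_mem ⟨0, hS0⟩ hSbdd
    set t0 := sSup S with ht0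
    set w := y - t0 • c with hw
    have hwD : w ∈ D := ht0mem.2
    have hwmin : w ∈ wMinSet C D := by
      refine ⟨hwD, ?_⟩
      rw [eq_empty_iff_forall_notMem]
      rintro x ⟨hx1, hx2⟩
      rw [Set.mem_sub] at hx1
      obtain ⟨a, ha, c', hc', hac⟩ := hx1
      rw [Set.mem_singleton_iff] at ha
      subst ha
      -- x = w - c', c' ∈ interior C, x ∈ D
      have cont : Continuous (fun ε : ℝ => c' - ε • c) := by continuity
      have htc : Tendsto (fun ε : ℝ => c' - ε • c) (𝓝 0) (𝓝 c') := by
        simpa using cont.tendsto 0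
      have hev : ∀ᶠ ε in 𝓝 (0:ℝ), c' - ε • c ∈ interior C :=
        htc.eventually (isOpen_interior.eventually_mem hc')
      have hev' : ∀ᶠ ε in 𝓝[>] (0:ℝ), c' - ε • c ∈ interior C :=
        hev.filter_mono nhdsWithin_le_nhds
      obtain ⟨ε, hε, hεpos⟩ := (hev'.and self_mem_nhdsWithin).exists
      replace hεpos : (0:ℝ) < ε := hεpos
      have hmemS : t0 + ε ∈ S := by
        have h0t0 : 0 ≤ t0 := le_csSup hSbdd hS0
        refine ⟨by linarith, ?_⟩
        have heq : y - (t0 + ε) • c = (w - c') + (c' - ε • c) := by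
          rw [hw, add_smul]; abel
        rw [heq]
        subst hac
        exact hDC _ hx2 _ (interior_subset hε)
      have := le_csSup hSbdd hmemS
      linarith
    -- y ∈ closure (wMinSet C D + C)
    have htend : Tendsto (fun n : ℕ => w + (t0 + 1/((n:ℝ)+1)) • c) atTop (𝓝 y) := by
      have h1 : Tendsto (fun n : ℕ => t0 + 1/((n:ℝ)+1)) atTop (𝓝 t0) := by
        have := tendsto_one_div_add_atTop_nhds_zero_nat (𝕜 := ℝ)
        simpa using tendsto_const_nhds.add this
      have h2 := (h1.smul_const c).const_add w
      have heq : w + t0 • c = y := by rw [hw]; abel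
      rwa [heq] at h2
    refine mem_closure_of_tendsto htend (Eventually.of_forall fun n => ?_)
    have hpos : (0:ℝ) < t0 + 1/((n:ℝ)+1) := by
      have h0t0 : 0 ≤ t0 := le_csSup hSbdd hS0
      positivity
    have hkC : (t0 + 1/((n:ℝ)+1)) • c ∈ C := hCone _ hpos (smul_mem_smul_set hcC)
    exact ⟨w, hwmin, _, hkC, rfl⟩

lemma closure_iUnion_closure' {ι : Type*} (s : ι → Set Y) :
    closure (⋃ i, closure (s i)) = closure (⋃ i, s i) :=
  subset_antisymm
    (closure_minimal (iUnion_subset fun i => closure_mono (subset_iUnion s i)) isClosed_closure)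
    (closure_mono (iUnion_mono fun i => subset_closure))

lemma upClo_iUnion {ι : Type*} (C : Set Y) (s : ι → Set Y) :
    upClo C (⋃ i, s i) = closure (⋃ i, upClo C (s i)) := by
  unfold upClo
  rw [Set.iUnion_add, ← closure_iUnion_closure' (fun i => s i + C)]

theorem stmt_10 {ι : Type*} (C : Set Y) (hC : Convex ℝ C)
    (hCone : ∀ r : ℝ, 0 < r → r • C ⊆ C)
    (hInt : (interior C).Nonempty) (hIntNe : interior C ≠ univ)
    (A : ι → Set Y)
    (hAi : ∀ i, (upClo C (A i)).Nonempty ∧ upClo C (A i) ≠ univ)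
    (hU1 : (upClo C (⋃ i, A i)).Nonempty) (hU2 : upClo C (⋃ i, A i) ≠ univ) :
    infSet C (⋃ i, A i) = infSet C (⋃ i, infSet C (A i)) := by
  have hU : upClo C (⋃ i, infSet C (A i)) = upClo C (⋃ i, A i) := by
    rw [upClo_iUnion, upClo_iUnion]
    exact congrArg closure <| iUnion_congr fun i => key_lemma C hC hCone hInt (A i) (hAi i).2
  show wMinSet C (upClo C (⋃ i, A i)) = wMinSet C (upClo C (⋃ i, infSet C (A i)))
  rw [hU]
end

section
/- For a subset A of Y, if ∅ ≠ Cl₊A ≠ Y then A ∩ Inf A = wMin A, i.e., wMin A = A ∩ Inf A. -/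
open Set Pointwise Topology

variable {Y : Type*} [AddCommGroup Y] [Module ℝ Y] [TopologicalSpace Y]
  [IsTopologicalAddGroup Y] [ContinuousSMul ℝ Y]

theorem stmt_11 (C A : Set Y) (hC : Convex ℝ C)
    (hCone : ∀ r : ℝ, 0 < r → r • C ⊆ C)
    (hInt : (interior C).Nonempty) (hIntNe : interior C ≠ univ)
    (h1 : (upClo C A).Nonempty) (h2 : upClo C A ≠ univ) :
    wMinSet C A = A ∩ infSet C A := by
  -- C + C ⊆ C
  have hCC : C + C ⊆ C := by
    rintro _ ⟨c, hc, c', hc', rfl⟩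
    have hmid : (1/2 : ℝ) • c + (1/2 : ℝ) • c' ∈ C :=
      hC hc hc' (by norm_num) (by norm_num) (by norm_num)
    have := hCone 2 (by norm_num) ⟨_, hmid, rfl⟩
    have h2eq : (2 : ℝ) • ((1/2 : ℝ) • c + (1/2 : ℝ) • c') = c + c' := by
      rw [smul_add, smul_smul, smul_smul]; norm_num
    simpa only [h2eq] using this
  -- C + interior C ⊆ interior C
  have hCI : C + interior C ⊆ interior C := by
    apply interior_maximal
    · exact Subset.trans (add_subset_add_left interior_subset) hCC
    · exact isOpen_interior.add_left
  -- A ⊆ upClo C A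
  have hAsub : A ⊆ upClo C A := by
    intro a ha
    obtain ⟨c, hc⟩ := hInt
    have hcC := interior_subset hc
    refine mem_closure_of_tendsto (f := fun r : ℝ => a + r • c) (b := 𝓝[>] (0:ℝ)) ?_ ?_
    · have : Filter.Tendsto (fun r : ℝ => a + r • c) (𝓝 0) (𝓝 (a + (0:ℝ) • c)) :=
        (continuous_const.add (continuous_id.smul continuous_const)).tendsto 0
      simpa using this.mono_left nhdsWithin_le_nhds
    · filter_upwards [self_mem_nhdsWithin] with r hr
      exact ⟨a, ha, r • c, hCone r hr ⟨c, hcC, rfl⟩, rfl⟩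
  ext y
  constructor
  · rintro ⟨hyA, hemp⟩
    refine ⟨hyA, hAsub hyA, ?_⟩
    rw [eq_empty_iff_forall_notMem]
    rintro x ⟨hx1, hx2⟩
    obtain ⟨u, hu, d, hd, hxeq⟩ := hx1
    rw [mem_singleton_iff] at hu
    subst hu
    subst hxeq
    have hy : u ∈ interior C + closure (A + C) :=
      ⟨d, hd, u - d, hx2, by module⟩
    rw [isOpen_interior.add_closure] at hy
    obtain ⟨e, he, _, ⟨a, ha, c, hc, rfl⟩, heq⟩ := hy
    have hd' : c + e ∈ interior C := hCI ⟨c, hc, e, he, rfl⟩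
    have : a ∈ ({u} - interior C) ∩ A := by
      refine ⟨⟨u, rfl, c + e, hd', ?_⟩, ha⟩
      simp only at heq
      rw [← heq]; module
    rw [hemp] at this
    exact this
  · rintro ⟨hyA, _, hemp⟩
    refine ⟨hyA, ?_⟩
    rw [eq_empty_iff_forall_notMem] at hemp ⊢
    intro x hx
    exact hemp x ⟨hx.1, hAsub hx.2⟩
end

section
/- The relation A ≼ B :⇔ Cl₊A ⊇ Cl₊B defines a partial order on the set I of self-infimal subsets of Y (sets A with A = Inf A), and (I, ≼) is a complete lattice; moreover for every nonempty family 𝒜 ⊆ I, the infimum of 𝒜 is Inf(⋃_{A∈𝒜} A). -/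
open Set Pointwise
open scoped Classical

/-- The extended space `Y ∪ {-∞, +∞}`. -/
abbrev EY (Y : Type*) := WithBot (WithTop Y)

/-- Embedding of `Y` into the extended space. -/
def toE {Y : Type*} (y : Y) : EY Y := ((y : WithTop Y) : EY Y)

/-- The element `+∞` of the extended space. -/
def posInf (Y : Type*) : EY Y := ((⊤ : WithTop Y) : EY Y)

variable {Y : Type*} [AddCommGroup Y] [Module ℝ Y] [TopologicalSpace Y]
  [IsTopologicalAddGroup Y] [ContinuousSMul ℝ Y]

/-- Weakly maximal elements with respect to the cone `C`. -/
def wMaxSet (C A : Set Y) : Set Y := {y ∈ A | ({y} + interior C) ∩ A = ∅}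

/-- Upper closure (w.r.t. `C`) of a subset of the extended space. -/
noncomputable def upCloE (C : Set Y) (A : Set (EY Y)) : Set Y :=
  if (⊥ : EY Y) ∈ A then univ
  else if A = {posInf Y} then ∅
  else closure (toE ⁻¹' A + C)

/-- Infimal set (w.r.t. `C`) of a subset of the extended space. -/
noncomputable def infSE (C : Set Y) (A : Set (EY Y)) : Set (EY Y) :=
  if upCloE C A = univ then {⊥}
  else if upCloE C A = ∅ then {posInf Y}
  else toE '' wMinSet C (upCloE C A)

/-- Lower closure (w.r.t. `C`) of a subset of the extended space. -/
noncomputable def loCloE (C : Set Y) (A : Set (EY Y)) : Set Y :=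
  if posInf Y ∈ A then univ
  else if A = {(⊥ : EY Y)} then ∅
  else closure (toE ⁻¹' A - C)

/-- Supremal set (w.r.t. `C`) of a subset of the extended space. -/
noncomputable def supSE (C : Set Y) (A : Set (EY Y)) : Set (EY Y) :=
  if loCloE C A = univ then {posInf Y}
  else if loCloE C A = ∅ then {(⊥ : EY Y)}
  else toE '' wMaxSet C (loCloE C A)

open Filter Topology

-- basic facts
lemma toE_inj : Function.Injective (toE (Y := Y)) := by
  intro a b h
  simpa [toE] using h

lemma toE_ne_bot (y : Y) : toE y ≠ (⊥ : EY Y) := by simp [toE]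

lemma toE_ne_posInf (y : Y) : toE y ≠ posInf Y := by simp [toE, posInf]

lemma bot_ne_posInf : (⊥ : EY Y) ≠ posInf Y := by
  unfold posInf; exact WithBot.bot_ne_coe

section Cone

variable {C : Set Y}

lemma l_addCC (hC : Convex ℝ C) (hCone : ∀ r : ℝ, 0 < r → r • C ⊆ C) : C + C ⊆ C := by
  rintro x ⟨a, ha, b, hb, rfl⟩
  have hmid : (1/2 : ℝ) • a + (1/2 : ℝ) • b ∈ C :=
    hC ha hb (by norm_num) (by norm_num) (by norm_num)
  have h2 : (2:ℝ) • ((1/2 : ℝ) • a + (1/2 : ℝ) • b) ∈ C :=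
    hCone 2 (by norm_num) (Set.smul_mem_smul_set hmid)
  have heq : (2:ℝ) • ((1/2 : ℝ) • a + (1/2 : ℝ) • b) = a + b := by
    rw [smul_add, smul_smul, smul_smul]; norm_num
  rwa [heq] at h2

lemma l_clAdd (S : Set Y) : closure S + C ⊆ closure (S + C) := by
  rintro x ⟨a, ha, c, hc, rfl⟩
  exact map_mem_closure (f := fun x => x + c) (continuous_add_right c) ha
    (fun s hs => Set.add_mem_add hs hc)

lemma l_upCloProps (hC : Convex ℝ C) (hCone : ∀ r : ℝ, 0 < r → r • C ⊆ C)
    (A : Set (EY Y)) : IsClosed (upCloE C A) ∧ upCloE C A + C ⊆ upCloE C A := by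
  unfold upCloE
  split_ifs
  · exact ⟨isClosed_univ, subset_univ _⟩
  · refine ⟨isClosed_empty, ?_⟩; simp
  · refine ⟨isClosed_closure, ?_⟩
    calc closure (toE ⁻¹' A + C) + C ⊆ closure ((toE ⁻¹' A + C) + C) := l_clAdd _
      _ ⊆ closure (toE ⁻¹' A + C) := by
          apply closure_mono
          rw [add_assoc]
          exact Set.add_subset_add_left (l_addCC hC hCone)

lemma l_core (hCone : ∀ r : ℝ, 0 < r → r • C ⊆ C)
    (hInt : (interior C).Nonempty) (F : Set Y)
    (hcl : IsClosed F) (hFC : F + C ⊆ F) (hne : F ≠ univ) :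
    closure (wMinSet C F + C) = F := by
  obtain ⟨c, hc⟩ := hInt
  have hcC : c ∈ C := interior_subset hc
  apply Subset.antisymm
  · apply closure_minimal _ hcl
    rintro x ⟨a, ha, b, hb, rfl⟩
    exact hFC ⟨a, ha.1, b, hb, rfl⟩
  · intro y hy
    set T : Set ℝ := {t | y - t • c ∈ F} with hTdef
    have hT0 : (0:ℝ) ∈ T := by simpa [hTdef] using hy
    have hTclosed : IsClosed T :=
      hcl.preimage (continuous_const.sub (continuous_id.smul continuous_const))
    have hTbdd : BddAbove T := by
      by_contra hb
      apply hne
      rw [eq_univ_iff_forall]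
      intro z
      have h0 : Tendsto (fun t : ℝ => t⁻¹) atTop (𝓝 (0:ℝ)) := tendsto_inv_atTop_zero
      have h1 : Tendsto (fun t : ℝ => t⁻¹ • (z - y)) atTop (𝓝 ((0:ℝ) • (z - y))) :=
        h0.smul_const _
      rw [zero_smul] at h1
      have h2 : Tendsto (fun t : ℝ => t⁻¹ • (z - y) + c) atTop (𝓝 c) := by
        simpa using h1.add_const c
      have h3 : ∀ᶠ t in atTop, t⁻¹ • (z - y) + c ∈ interior C :=
        h2.eventually_mem (isOpen_interior.mem_nhds hc)
      obtain ⟨t₀, ht₀⟩ := h3.exists_forall_of_atTop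
      obtain ⟨t, htT, htgt⟩ := not_bddAbove_iff.mp hb (max t₀ 1)
      have htpos : (0:ℝ) < t := lt_of_lt_of_le (by norm_num) ((le_max_right _ _).trans htgt.le)
      have hmem : t⁻¹ • (z - y) + c ∈ C :=
        interior_subset (ht₀ t ((le_max_left _ _).trans htgt.le))
      have hmem2 : t • (t⁻¹ • (z - y) + c) ∈ C := hCone t htpos (Set.smul_mem_smul_set hmem)
      have heq : t • (t⁻¹ • (z - y) + c) = (z - y) + t • c := by
        rw [smul_add, smul_smul, mul_inv_cancel₀ (ne_of_gt htpos), one_smul]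
      rw [heq] at hmem2
      have hzeq : (y - t • c) + ((z - y) + t • c) = z := by abel
      exact hFC ⟨y - t • c, htT, (z - y) + t • c, hmem2, hzeq⟩
    have hTne : T.Nonempty := ⟨0, hT0⟩
    have htbar : sSup T ∈ T := hTclosed.csSup_mem hTne hTbdd
    have ht0 : (0:ℝ) ≤ sSup T := le_csSup hTbdd hT0
    set w := y - sSup T • c with hwdef
    have hwF : w ∈ F := htbar
    have hwMin : w ∈ wMinSet C F := by
      refine ⟨hwF, ?_⟩
      rw [eq_empty_iff_forall_notMem]
      rintro u ⟨hu1, hu2⟩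
      obtain ⟨a, ha, d, hd, rfl⟩ := hu1
      rw [mem_singleton_iff] at ha
      subst ha
      have htend : Tendsto (fun ε : ℝ => d - ε • c) (𝓝[>] 0) (𝓝 d) := by
        have : Tendsto (fun ε : ℝ => d - ε • c) (𝓝 0) (𝓝 (d - (0:ℝ) • c)) :=
          (continuous_const.sub (continuous_id.smul continuous_const)).tendsto 0
        simpa using this.mono_left nhdsWithin_le_nhds
      have hEv : ∀ᶠ ε in 𝓝[>] (0:ℝ), d - ε • c ∈ interior C :=
        htend.eventually_mem (isOpen_interior.mem_nhds hd)
      have hpos : ∀ᶠ ε in 𝓝[>] (0:ℝ), (0:ℝ) < ε :=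
        eventually_mem_nhdsWithin
      obtain ⟨ε, hε1, hε2⟩ := (hEv.and hpos).exists
      have hnew : y - (sSup T + ε) • c ∈ F := by
        have : (w - d) + (d - ε • c) ∈ F := hFC ⟨w - d, hu2, d - ε • c, interior_subset hε1, rfl⟩
        have heq : (w - d) + (d - ε • c) = y - (sSup T + ε) • c := by
          rw [hwdef, add_smul]; abel
        rwa [heq] at this
      have : sSup T + ε ≤ sSup T := le_csSup hTbdd hnew
      linarith
    have htendy : Tendsto (fun ε : ℝ => w + (sSup T + ε) • c) (𝓝[>] 0) (𝓝 y) := by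
      have : Tendsto (fun ε : ℝ => w + (sSup T + ε) • c) (𝓝 0)
          (𝓝 (w + (sSup T + 0) • c)) := by
        apply Continuous.tendsto
        exact continuous_const.add ((continuous_const.add continuous_id).smul continuous_const)
      have heq : w + (sSup T + 0) • c = y := by rw [hwdef]; simp
      rw [heq] at this
      exact this.mono_left nhdsWithin_le_nhds
    apply mem_closure_of_tendsto htendy
    refine eventually_mem_nhdsWithin.mono fun ε hε => ?_
    have hpos : (0:ℝ) < sSup T + ε := by
      have : (0:ℝ) < ε := hε
      linarith
    exact ⟨w, hwMin, (sSup T + ε) • c, hCone _ hpos (Set.smul_mem_smul_set hcC), rfl⟩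

lemma upCloE_image (W : Set Y) : upCloE C (toE '' W) = closure (W + C) := by
  unfold upCloE
  rw [if_neg, if_neg, preimage_image_eq _ toE_inj]
  · intro h
    have : posInf Y ∈ toE '' W := h ▸ mem_singleton _
    obtain ⟨y, _, hy⟩ := this
    exact toE_ne_posInf y hy
  · rintro ⟨y, _, hy⟩
    exact toE_ne_bot y hy

lemma upCloE_botset : upCloE C ({⊥} : Set (EY Y)) = univ := by
  unfold upCloE
  rw [if_pos (mem_singleton _)]

lemma upCloE_posInfset : upCloE C ({posInf Y} : Set (EY Y)) = ∅ := by
  unfold upCloE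
  rw [if_neg, if_pos rfl]
  simpa using bot_ne_posInf (Y := Y)

lemma l_clinf (hC : Convex ℝ C) (hCone : ∀ r : ℝ, 0 < r → r • C ⊆ C)
    (hInt : (interior C).Nonempty) (A : Set (EY Y)) :
    upCloE C (infSE C A) = upCloE C A := by
  unfold infSE
  split_ifs with h1 h2
  · rw [upCloE_botset, h1]
  · rw [upCloE_posInfset, h2]
  · rw [upCloE_image]
    exact l_core hCone hInt _ (l_upCloProps hC hCone A).1 (l_upCloProps hC hCone A).2 h1

lemma l_congr {A B : Set (EY Y)} (h : upCloE C A = upCloE C B) :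
    infSE C A = infSE C B := by
  unfold infSE
  rw [h]

lemma l_base (A : Set (EY Y)) : toE ⁻¹' A + C ⊆ upCloE C A := by
  unfold upCloE
  split_ifs with g1 g2
  · exact subset_univ _
  · have h0 : toE ⁻¹' A = ∅ := by
      rw [eq_empty_iff_forall_notMem]
      intro y hy
      rw [g2] at hy
      exact toE_ne_posInf y hy
    simp [h0]
  · exact subset_closure

lemma l_upCloMono {A B : Set (EY Y)} (hAB : A ⊆ B) : upCloE C A ⊆ upCloE C B := by
  by_cases hbB : (⊥ : EY Y) ∈ B
  · have hB : upCloE C B = univ := by unfold upCloE; rw [if_pos hbB]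
    rw [hB]; exact subset_univ _
  have hbA : (⊥ : EY Y) ∉ A := fun h => hbB (hAB h)
  by_cases hpA : A = {posInf Y}
  · have hA : upCloE C A = ∅ := by unfold upCloE; rw [if_neg hbA, if_pos hpA]
    rw [hA]; exact empty_subset _
  by_cases hpB : B = {posInf Y}
  · have hA0 : toE ⁻¹' A = ∅ := by
      rw [eq_empty_iff_forall_notMem]
      intro y hy
      have := hAB hy
      rw [hpB] at this
      exact toE_ne_posInf y this
    have hA : upCloE C A = ∅ := by
      unfold upCloE; rw [if_neg hbA, if_neg hpA]; simp [hA0]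
    rw [hA]; exact empty_subset _
  · unfold upCloE
    rw [if_neg hbA, if_neg hpA, if_neg hbB, if_neg hpB]
    exact closure_mono (Set.add_subset_add_right (preimage_mono hAB))

lemma l_iUnion (hC : Convex ℝ C) (hCone : ∀ r : ℝ, 0 < r → r • C ⊆ C)
    {ι : Sort*} (f : ι → Set (EY Y)) (B : Set (EY Y))
    (h : ∀ i, upCloE C (f i) ⊆ upCloE C B) :
    upCloE C (⋃ i, f i) ⊆ upCloE C B := by
  conv_lhs => rw [upCloE]
  split_ifs with h1 h2
  · simp only [mem_iUnion] at h1
    obtain ⟨i, hbA⟩ := h1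
    have hu : upCloE C (f i) = univ := by unfold upCloE; rw [if_pos hbA]
    have := h i
    rw [hu] at this
    rw [univ_subset_iff.mp this]
  · exact empty_subset _
  · refine closure_minimal ?_ (l_upCloProps hC hCone B).1
    rintro x ⟨y, hy, cc, hcc, rfl⟩
    simp only [mem_preimage, mem_iUnion] at hy
    obtain ⟨i, hyA⟩ := hy
    exact h i (l_base (f i) ⟨y, hyA, cc, hcc, rfl⟩)

end Cone

theorem stmt_12 (C : Set Y) (hC : Convex ℝ C)
    (hCone : ∀ r : ℝ, 0 < r → r • C ⊆ C)
    (hInt : (interior C).Nonempty) (hIntNe : interior C ≠ univ) :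
    ∃ L : CompleteLattice {A : Set (EY Y) // A = infSE C A},
      (∀ A B : {A : Set (EY Y) // A = infSE C A},
        L.le A B ↔ upCloE C (B : Set (EY Y)) ⊆ upCloE C (A : Set (EY Y))) ∧
      ∀ 𝒜 : Set {A : Set (EY Y) // A = infSE C A}, 𝒜.Nonempty →
        ((L.sInf 𝒜 : {A : Set (EY Y) // A = infSE C A}) : Set (EY Y)) =
          infSE C (⋃ A ∈ 𝒜, (A : Set (EY Y))) := by
  letI PO : PartialOrder {A : Set (EY Y) // A = infSE C A} :=
    { le := fun A B => upCloE C B.1 ⊆ upCloE C A.1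
      lt := fun A B => (upCloE C B.1 ⊆ upCloE C A.1) ∧ ¬(upCloE C A.1 ⊆ upCloE C B.1)
      lt_iff_le_not_ge := fun _ _ => Iff.rfl
      le_refl := fun A => subset_rfl
      le_trans := fun A B D h1 h2 => Set.Subset.trans h2 h1
      le_antisymm := fun A B h1 h2 => by
        apply Subtype.ext
        rw [A.2, B.2]
        exact l_congr (h2.antisymm h1) }
  letI IS : InfSet {A : Set (EY Y) // A = infSE C A} :=
    ⟨fun 𝒜 => ⟨infSE C (⋃ A ∈ 𝒜, (A : Set (EY Y))),
      (l_congr (l_clinf hC hCone hInt _)).symm⟩⟩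
  have hglb : ∀ s : Set {A : Set (EY Y) // A = infSE C A},
      @IsGLB _ PO.toPreorder.toLE s (IS.sInf s) := by
    intro s
    constructor
    · intro A hA
      show upCloE C A.1 ⊆ upCloE C (infSE C (⋃ B ∈ s, (B : Set (EY Y))))
      rw [l_clinf hC hCone hInt]
      exact l_upCloMono (subset_biUnion_of_mem hA)
    · intro B hB
      show upCloE C (infSE C (⋃ A ∈ s, (A : Set (EY Y)))) ⊆ upCloE C B.1
      rw [l_clinf hC hCone hInt, biUnion_eq_iUnion]
      exact l_iUnion hC hCone _ _ (fun i => hB i.2)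
  exact ⟨@completeLatticeOfInf _ PO IS hglb, fun A B => Iff.rfl, fun 𝒜 _ => rfl⟩
end
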